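/- Let v : ℝⁿ → ℝ be semiconcave with constant C and suppose v is a viscosity solution of (1/2)⟨A(x)Dv, Dv⟩ + V(x) = E with E > sup V, A symmetric positive definite and continuous, V continuous. If x : [0,τ] → ℝⁿ is a Lipschitz arc such that for a.e. s the derivative ẋ(s) lies in A(x(s))·D⁺v(x(s)), and v is differentiable at x(s) for a.e. s ∈ [0,τ], then v(x(τ)) - v(x(0)) = ∫₀^τ 2(E - V(x(σ))) dσ ≥ 2μτ, where μ = E - sup V > 0. -/

import Mathlib

open RealInnerProductSpace
open Set MeasureTheory

/-- The (Dini) superdifferential of `v` at `x`. -/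
def superdiff {n : ℕ} (v : EuclideanSpace ℝ (Fin n) → ℝ)
    (x : EuclideanSpace ℝ (Fin n)) : Set (EuclideanSpace ℝ (Fin n)) :=
  {p | ∀ ε > 0, ∃ δ > 0, ∀ y, ‖y - x‖ < δ → v y - v x - ⟪p, y - x⟫ ≤ ε * ‖y - x‖}

/-- The (Dini) subdifferential of `v` at `x`. -/
def subdiff {n : ℕ} (v : EuclideanSpace ℝ (Fin n) → ℝ)
    (x : EuclideanSpace ℝ (Fin n)) : Set (EuclideanSpace ℝ (Fin n)) :=
  {p | ∀ ε > 0, ∃ δ > 0, ∀ y, ‖y - x‖ < δ → v y - v x - ⟪p, y - x⟫ ≥ -(ε * ‖y - x‖)}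

variable {n : ℕ} {v : EuclideanSpace ℝ (Fin n) → ℝ} {x g p : EuclideanSpace ℝ (Fin n)}

lemma aux_littleo (h : HasGradientAt v g x) {ε : ℝ} (hε : 0 < ε) :
    ∃ δ > 0, ∀ y, ‖y - x‖ < δ → |v y - v x - ⟪g, y - x⟫| ≤ ε * ‖y - x‖ := by
  have h' := hasGradientAt_iff_hasFDerivAt.mp h
  have h2 := h'.isLittleO.def hε
  rw [Metric.eventually_nhds_iff] at h2
  obtain ⟨δ, hδ, hy⟩ := h2
  refine ⟨δ, hδ, fun y hyx => ?_⟩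
  have := hy (show dist y x < δ by rwa [dist_eq_norm])
  simpa [InnerProductSpace.toDual_apply_apply, Real.norm_eq_abs] using this

lemma grad_mem_superdiff (h : HasGradientAt v g x) : g ∈ superdiff v x := by
  intro ε hε
  obtain ⟨δ, hδ, hy⟩ := aux_littleo h hε
  exact ⟨δ, hδ, fun y hyx => (le_abs_self _).trans (hy y hyx)⟩

lemma grad_mem_subdiff (h : HasGradientAt v g x) : g ∈ subdiff v x := by
  intro ε hε
  obtain ⟨δ, hδ, hy⟩ := aux_littleo h hε
  exact ⟨δ, hδ, fun y hyx => neg_le_of_abs_le (hy y hyx)⟩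

lemma eq_grad_of_mem_superdiff (h : HasGradientAt v g x) (hp : p ∈ superdiff v x) : p = g := by
  have key : ∀ ε > (0:ℝ), ‖g - p‖ ^ 2 ≤ ε * (2 * ‖g - p‖) := by
    intro ε hε
    obtain ⟨δ₁, hδ₁, h1⟩ := hp ε hε
    obtain ⟨δ₂, hδ₂, h2⟩ := grad_mem_subdiff h ε hε
    set t : ℝ := min δ₁ δ₂ / (2 * (‖g - p‖ + 1)) with ht
    have hnn : (0:ℝ) ≤ ‖g - p‖ := norm_nonneg _
    have htpos : 0 < t := by positivity
    set y := x + t • (g - p) with hy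
    have hyx : y - x = t • (g - p) := by simp [hy]
    have hnorm : ‖y - x‖ = t * ‖g - p‖ := by
      rw [hyx, norm_smul, Real.norm_eq_abs, abs_of_pos htpos]
    have hlt : ‖y - x‖ < min δ₁ δ₂ := by
      rw [hnorm, ht]
      rw [div_mul_eq_mul_div, div_lt_iff₀ (by positivity)]
      have : 0 < min δ₁ δ₂ := lt_min hδ₁ hδ₂
      nlinarith
    have e1 := h1 y (hlt.trans_le (min_le_left _ _))
    have e2 := h2 y (hlt.trans_le (min_le_right _ _))
    have hinner : ⟪g, y - x⟫ - ⟪p, y - x⟫ = t * ‖g - p‖ ^ 2 := by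
      rw [hyx, ← inner_sub_left, real_inner_smul_right, real_inner_self_eq_norm_sq]
    have : t * ‖g - p‖ ^ 2 ≤ 2 * ε * (t * ‖g - p‖) := by
      rw [← hinner]
      rw [hnorm] at e1 e2
      linarith
    have := (mul_le_mul_iff_right₀ htpos).mp (by linarith : t * ‖g - p‖ ^ 2 ≤ t * (2 * ε * ‖g - p‖))
    linarith
  have h0 : ‖g - p‖ ^ 2 ≤ 0 := by
    refine le_of_forall_pos_le_add fun ε hε => ?_
    have hkey := key (ε / (2 * ‖g - p‖ + 1)) (by positivity)
    have hnn : (0:ℝ) ≤ ‖g - p‖ := norm_nonneg _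
    have hd : ε / (2 * ‖g - p‖ + 1) * (2 * ‖g - p‖) ≤ ε := by
      rw [div_mul_eq_mul_div, div_le_iff₀ (by positivity)]
      nlinarith
    linarith
  have : g - p = 0 := by
    have := norm_nonneg (g - p)
    have h1 : ‖g - p‖ = 0 := by nlinarith
    simpa [norm_eq_zero] using h1
  exact (sub_eq_zero.mp this).symm
variable {n : ℕ} {v : EuclideanSpace ℝ (Fin n) → ℝ}

lemma combo_norm_sq (x y : EuclideanSpace ℝ (Fin n)) {a b : ℝ} (ha : 0 ≤ a) (hb : 0 ≤ b)
    (hab : a + b = 1) :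
    ‖a • x + b • y‖ ^ 2 = a * ‖x‖ ^ 2 + b * ‖y‖ ^ 2 - a * b * ‖x - y‖ ^ 2 := by
  have h1 : ‖a • x + b • y‖ ^ 2 = ‖a • x‖ ^ 2 + 2 * ⟪a • x, b • y⟫ + ‖b • y‖ ^ 2 :=
    norm_add_sq_real _ _
  have h2 : ‖x - y‖ ^ 2 = ‖x‖ ^ 2 - 2 * ⟪x, y⟫ + ‖y‖ ^ 2 := norm_sub_sq_real _ _
  have h3 : ⟪a • x, b • y⟫ = a * (b * ⟪x, y⟫) := by
    rw [real_inner_smul_left, real_inner_smul_right]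
  have h4 : ‖a • x‖ = a * ‖x‖ := by rw [norm_smul, Real.norm_eq_abs, abs_of_nonneg ha]
  have h5 : ‖b • y‖ = b * ‖y‖ := by rw [norm_smul, Real.norm_eq_abs, abs_of_nonneg hb]
  have hb' : b = 1 - a := by linarith
  subst hb'
  rw [h1, h2, h3, h4, h5]; ring

lemma v_convex_aux {C : ℝ}
    (hsc : ∀ x y : EuclideanSpace ℝ (Fin n), ∀ lam ∈ Icc (0 : ℝ) 1,
      lam * v x + (1 - lam) * v y - v (lam • x + (1 - lam) • y)
        ≤ C / 2 * lam * (1 - lam) * ‖x - y‖ ^ 2) :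
    ConvexOn ℝ univ (fun z => max C 0 / 2 * ‖z‖ ^ 2 - v z) := by
  refine ⟨convex_univ, fun x _ y _ a b ha hb hab => ?_⟩
  simp only [smul_eq_mul]
  have hb' : 1 - a = b := by linarith
  have hscxy := hsc x y a ⟨ha, by linarith⟩
  rw [hb'] at hscxy
  have hid := combo_norm_sq x y ha hb hab
  have hC : C ≤ max C 0 := le_max_left _ _
  have hD : (0:ℝ) ≤ a * b * ‖x - y‖ ^ 2 := by positivity
  have h5 : C / 2 * (a * b * ‖x - y‖ ^ 2) ≤ max C 0 / 2 * (a * b * ‖x - y‖ ^ 2) :=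
    mul_le_mul_of_nonneg_right (by linarith) hD
  rw [hid]
  nlinarith [h5]

lemma v_lipschitzOn {C : ℝ}
    (hsc : ∀ x y : EuclideanSpace ℝ (Fin n), ∀ lam ∈ Icc (0 : ℝ) 1,
      lam * v x + (1 - lam) * v y - v (lam • x + (1 - lam) • y)
        ≤ C / 2 * lam * (1 - lam) * ‖x - y‖ ^ 2)
    (x₀ : EuclideanSpace ℝ (Fin n)) (r : ℝ) :
    ∃ K : NNReal, LipschitzOnWith K v (Metric.ball x₀ r) := by
  set C' := max C 0 with hC'
  have hC'0 : 0 ≤ C' := le_max_right _ _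
  set u := fun z : EuclideanSpace ℝ (Fin n) => C' / 2 * ‖z‖ ^ 2 - v z with hu
  have hconv : ConvexOn ℝ univ u := v_convex_aux hsc
  have hconv' : ConvexOn ℝ (Metric.ball x₀ (r + 1)) u :=
    hconv.subset (subset_univ _) (convex_ball _ _)
  have hucont : Continuous u := hconv.locallyLipschitz.continuous
  have hbd : Bornology.IsBounded (u '' Metric.ball x₀ (r + 1)) :=
    (((isCompact_closedBall x₀ (r + 1)).image hucont).isBounded).subset
      (image_mono Metric.ball_subset_closedBall)
  obtain ⟨K₁, hK₁⟩ := hconv'.exists_lipschitzOnWith_of_isBounded (lt_add_one r) hbd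
  set Kq : NNReal := (C' * (‖x₀‖ + |r|)).toNNReal with hKq
  refine ⟨Kq + K₁, LipschitzOnWith.of_dist_le_mul fun z hz w hw => ?_⟩
  have hz' : ‖z‖ ≤ ‖x₀‖ + |r| := by
    have := mem_ball_iff_norm.mp hz
    have h2 := norm_sub_norm_le z x₀
    have : ‖z - x₀‖ < r := by rwa [← dist_eq_norm] at this ⊢
    have hr : r ≤ |r| := le_abs_self r
    linarith
  have hw' : ‖w‖ ≤ ‖x₀‖ + |r| := by
    have := mem_ball_iff_norm.mp hw
    have h2 := norm_sub_norm_le w x₀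
    have hr : r ≤ |r| := le_abs_self r
    linarith
  have hq : |C' / 2 * ‖z‖ ^ 2 - C' / 2 * ‖w‖ ^ 2| ≤ C' * (‖x₀‖ + |r|) * ‖z - w‖ := by
    have h1 : |‖z‖ - ‖w‖| ≤ ‖z - w‖ := abs_norm_sub_norm_le _ _
    have h2 : |C' / 2 * ‖z‖ ^ 2 - C' / 2 * ‖w‖ ^ 2| = C' / 2 * |‖z‖ ^ 2 - ‖w‖ ^ 2| := by
      rw [← mul_sub, abs_mul, abs_of_nonneg (by positivity : (0:ℝ) ≤ C' / 2)]
    have h3 : |‖z‖ ^ 2 - ‖w‖ ^ 2| = |‖z‖ - ‖w‖| * (‖z‖ + ‖w‖) := by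
      rw [show ‖z‖ ^ 2 - ‖w‖ ^ 2 = (‖z‖ - ‖w‖) * (‖z‖ + ‖w‖) by ring, abs_mul]
      congr 1
      exact abs_of_nonneg (by positivity)
    rw [h2, h3]
    have h4 : |‖z‖ - ‖w‖| * (‖z‖ + ‖w‖) ≤ ‖z - w‖ * (2 * (‖x₀‖ + |r|)) :=
      mul_le_mul h1 (by linarith) (by positivity) (norm_nonneg _)
    have h5 := mul_le_mul_of_nonneg_left h4 (div_nonneg hC'0 (by norm_num) : (0:ℝ) ≤ C' / 2)
    nlinarith [h5]
  have hu' := hK₁.dist_le_mul z hz w hw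
  rw [Real.dist_eq] at hu'
  rw [dist_eq_norm] at hu'
  rw [Real.dist_eq, dist_eq_norm]
  have hvzw : v z - v w = (C' / 2 * ‖z‖ ^ 2 - C' / 2 * ‖w‖ ^ 2) - (u z - u w) := by
    simp only [hu]; ring
  have habs : |v z - v w| ≤ |C' / 2 * ‖z‖ ^ 2 - C' / 2 * ‖w‖ ^ 2| + |u z - u w| := by
    rw [hvzw]; exact abs_sub _ _
  have hKqc : (Kq : ℝ) = C' * (‖x₀‖ + |r|) := by
    rw [hKq, Real.coe_toNNReal _ (mul_nonneg hC'0 (by positivity))]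
  push_cast
  rw [hKqc]
  have habsu : |u z - u w| ≤ (K₁ : ℝ) * ‖z - w‖ := hu'
  linarith

/-- Along a generalized characteristic arc of a semiconcave viscosity solution of
`(1/2)⟪A(x)Dv, Dv⟫ + V(x) = E` with `E > sup V`, along which `v` is differentiable a.e.,
one has `v(x(τ)) - v(x(0)) = ∫₀^τ 2(E - V(x(σ))) dσ ≥ 2μτ` with `μ = E - sup V > 0`. -/
theorem energy_growth_along_characteristic {n : ℕ}
    (A : EuclideanSpace ℝ (Fin n) → EuclideanSpace ℝ (Fin n) →L[ℝ] EuclideanSpace ℝ (Fin n))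
    (hAcont : Continuous A)
    (hAsymm : ∀ x p q, ⟪A x p, q⟫ = ⟪p, A x q⟫)
    (hApos : ∀ x p, p ≠ 0 → 0 < ⟪A x p, p⟫)
    (V : EuclideanSpace ℝ (Fin n) → ℝ) (hV : Continuous V) (E : ℝ)
    (hVbdd : BddAbove (Set.range V)) (henergy : sSup (Set.range V) < E)
    (v : EuclideanSpace ℝ (Fin n) → ℝ) (C : ℝ)
    (hsc : ∀ x y : EuclideanSpace ℝ (Fin n), ∀ lam ∈ Icc (0 : ℝ) 1,
      lam * v x + (1 - lam) * v y - v (lam • x + (1 - lam) • y)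
        ≤ C / 2 * lam * (1 - lam) * ‖x - y‖ ^ 2)
    (hsubsol : ∀ x, ∀ p ∈ superdiff v x, 1 / 2 * ⟪A x p, p⟫ + V x ≤ E)
    (hsupsol : ∀ x, ∀ p ∈ subdiff v x, 1 / 2 * ⟪A x p, p⟫ + V x ≥ E)
    (τ : ℝ) (hτ : 0 ≤ τ)
    (γ : ℝ → EuclideanSpace ℝ (Fin n)) (L : NNReal)
    (hLip : LipschitzOnWith L γ (Icc 0 τ))
    (hae : ∀ᵐ s ∂(volume.restrict (Icc 0 τ)),
      DifferentiableAt ℝ v (γ s) ∧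
      ∃ p ∈ superdiff v (γ s), HasDerivAt γ (A (γ s) p) s) :
    v (γ τ) - v (γ 0) = ∫ s in (0 : ℝ)..τ, 2 * (E - V (γ s)) ∧
    v (γ τ) - v (γ 0) ≥ 2 * (E - sSup (Set.range V)) * τ := by
  classical
  -- the clamping map
  set P : ℝ → ℝ := fun t => max 0 (min t τ) with hPdef
  have hPmem : ∀ t, P t ∈ Icc 0 τ :=
    fun t => ⟨le_max_left _ _, max_le hτ (min_le_right _ _)⟩
  have hPid : ∀ t ∈ Icc 0 τ, P t = t := by
    intro t ht
    simp only [hPdef]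
    rw [min_eq_left ht.2, max_eq_right ht.1]
  have hPlip : LipschitzWith 1 P := by
    refine LipschitzWith.of_dist_le_mul fun a b => ?_
    rw [Real.dist_eq, Real.dist_eq]
    have h1 : |P a - P b| ≤ |min a τ - min b τ| := by
      simp only [hPdef, max_comm (0:ℝ)]
      exact abs_max_sub_max_le_abs _ _ _
    have h2 : |min a τ - min b τ| ≤ |a - b| := by
      rw [min_comm a τ, min_comm b τ]
      exact abs_min_sub_min_le_max _ _ _ _ |>.trans (by simp)
    calc |P a - P b| ≤ |a - b| := h1.trans h2
    _ = 1 * |a - b| := (one_mul _).symm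
  -- Lipschitz bound for v on a ball containing the curve
  have hcomp : IsCompact (γ '' Icc 0 τ) := isCompact_Icc.image_of_continuousOn hLip.continuousOn
  obtain ⟨r, hsub⟩ := hcomp.isBounded.subset_ball (γ 0)
  obtain ⟨Kv, hKv⟩ := v_lipschitzOn hsc (γ 0) r
  have hmemball : ∀ t, γ (P t) ∈ Metric.ball (γ 0) r :=
    fun t => hsub (mem_image_of_mem γ (hPmem t))
  -- the composed function and its Lipschitz property
  set g : ℝ → ℝ := fun t => v (γ (P t)) with hgdef
  have hγP : ∀ a b : ℝ, dist (γ (P a)) (γ (P b)) ≤ (L : ℝ) * dist a b := by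
    intro a b
    calc dist (γ (P a)) (γ (P b)) ≤ (L : ℝ) * dist (P a) (P b) :=
          hLip.dist_le_mul _ (hPmem a) _ (hPmem b)
    _ ≤ (L : ℝ) * dist a b := by
          have := hPlip.dist_le_mul a b
          rw [NNReal.coe_one, one_mul] at this
          exact mul_le_mul_of_nonneg_left this L.coe_nonneg
  have hglip : LipschitzWith (Kv * L) g := by
    refine LipschitzWith.of_dist_le_mul fun a b => ?_
    calc dist (g a) (g b) ≤ (Kv : ℝ) * dist (γ (P a)) (γ (P b)) :=
          hKv.dist_le_mul _ (hmemball a) _ (hmemball b)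
    _ ≤ (Kv : ℝ) * ((L : ℝ) * dist a b) :=
          mul_le_mul_of_nonneg_left (hγP a b) Kv.coe_nonneg
    _ = ((Kv * L : NNReal) : ℝ) * dist a b := by push_cast; ring
  have hgcont : Continuous g := hglip.continuous
  set M : ℝ := ((Kv * L : NNReal) : ℝ) with hMdef
  -- the candidate derivative
  have hγPcont : Continuous fun t => γ (P t) :=
    hLip.continuousOn.comp_continuous hPlip.continuous hPmem
  set φ : ℝ → ℝ := fun s => 2 * (E - V (γ (P s))) with hφdef
  have hφcont : Continuous φ := continuous_const.mul (continuous_const.sub (hV.comp hγPcont))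
  set h : ℕ → ℝ := fun n => 1 / ((n : ℝ) + 1) with hhdef
  have hhpos : ∀ n, 0 < h n := fun n => by positivity
  have hh0 : Filter.Tendsto h Filter.atTop (nhds 0) := tendsto_one_div_add_atTop_nhds_zero_nat
  have key : ∀ (f : ℝ → ℝ) (d t : ℝ), HasDerivAt f d t →
      Filter.Tendsto (fun n => (f (t + h n) - f t) / h n) Filter.atTop (nhds d) := by
    intro f d t hf
    have hslope := hasDerivAt_iff_tendsto_slope.mp hf
    have hseq : Filter.Tendsto (fun n => t + h n) Filter.atTop (nhdsWithin t {t}ᶜ) := by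
      rw [tendsto_nhdsWithin_iff]
      constructor
      · have ht2 := hh0.const_add t
        rw [add_zero] at ht2
        exact ht2
      · refine Filter.Eventually.of_forall fun n => ?_
        simp only [mem_compl_iff, mem_singleton_iff]
        have := hhpos n
        intro hcon
        nlinarith [hcon]
    have hc := hslope.comp hseq
    refine hc.congr fun n => ?_
    simp only [Function.comp_apply, slope_def_field, add_sub_cancel_left]
  -- a.e. derivative of g
  have hderiv : ∀ᵐ s ∂(volume.restrict (Ioo 0 τ)), HasDerivAt g (φ s) s := by
    have hae' := ae_restrict_of_ae_restrict_of_subset Ioo_subset_Icc_self hae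
    have hmem : ∀ᵐ s ∂(volume.restrict (Ioo 0 τ)), s ∈ Ioo 0 τ :=
      ae_restrict_mem measurableSet_Ioo
    filter_upwards [hae', hmem] with s hd hs
    obtain ⟨hdiff, p, hp, hγ'⟩ := hd
    have hgrad : HasGradientAt v (gradient v (γ s)) (γ s) := hdiff.hasGradientAt
    have hpg : p = gradient v (γ s) := eq_grad_of_mem_superdiff hgrad hp
    have hsup := grad_mem_superdiff hgrad
    have hsubd := grad_mem_subdiff hgrad
    have heq : ⟪A (γ s) (gradient v (γ s)), gradient v (γ s)⟫ = 2 * (E - V (γ s)) := by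
      have h1 := hsubsol (γ s) _ hsup
      have h2 := hsupsol (γ s) _ hsubd
      linarith
    have hF : HasFDerivAt v
        ((InnerProductSpace.toDual ℝ (EuclideanSpace ℝ (Fin n))) (gradient v (γ s))) (γ s) :=
      hasGradientAt_iff_hasFDerivAt.mp hgrad
    rw [hpg] at hγ'
    have hcomp2 : HasDerivAt (fun t => v (γ t)) (2 * (E - V (γ s))) s := by
      have hc := hF.comp_hasDerivAt s hγ'
      have hval : (InnerProductSpace.toDual ℝ (EuclideanSpace ℝ (Fin n)))
          (gradient v (γ s)) (A (γ s) (gradient v (γ s))) = 2 * (E - V (γ s)) := by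
        rw [InnerProductSpace.toDual_apply_apply, real_inner_comm, heq]
      rw [hval] at hc
      exact hc
    have hev : g =ᶠ[nhds s] fun t => v (γ t) := by
      filter_upwards [isOpen_Ioo.mem_nhds hs] with t ht
      simp only [hgdef]
      rw [hPid t (Ioo_subset_Icc_self ht)]
    have hgd : HasDerivAt g (2 * (E - V (γ s))) s := hcomp2.congr_of_eventuallyEq hev
    have hφs : φ s = 2 * (E - V (γ s)) := by
      simp only [hφdef]
      rw [hPid s (Ioo_subset_Icc_self hs)]
    rwa [hφs]
  -- dominated convergence
  have hrestrict : volume.restrict (Ioc (0:ℝ) τ) = volume.restrict (Ioo 0 τ) :=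
    (Measure.restrict_congr_set Ioo_ae_eq_Ioc).symm
  set F : ℕ → ℝ → ℝ := fun n s => (g (s + h n) - g s) / h n with hFdef
  have htend : ∀ᵐ s ∂(volume.restrict (Ioc (0:ℝ) τ)),
      Filter.Tendsto (fun n => F n s) Filter.atTop (nhds (φ s)) := by
    rw [hrestrict]
    filter_upwards [hderiv] with s hs using key g (φ s) s hs
  have hFmeas : ∀ n, AEStronglyMeasurable (F n) (volume.restrict (Ioc (0:ℝ) τ)) := fun n =>
    (((hgcont.comp (continuous_id.add continuous_const)).sub hgcont).div_const
      _).aestronglyMeasurable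
  have hboundint : Integrable (fun _ : ℝ => M) (volume.restrict (Ioc (0:ℝ) τ)) :=
    integrableOn_const measure_Ioc_lt_top.ne
  have hFbound : ∀ n, ∀ᵐ s ∂(volume.restrict (Ioc (0:ℝ) τ)), ‖F n s‖ ≤ M := by
    intro n
    refine Filter.Eventually.of_forall fun s => ?_
    have hd := hglip.dist_le_mul (s + h n) s
    rw [Real.dist_eq, Real.dist_eq, add_sub_cancel_left, abs_of_pos (hhpos n)] at hd
    simp only [hFdef, Real.norm_eq_abs, abs_div, abs_of_pos (hhpos n)]
    rw [div_le_iff₀ (hhpos n)]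
    exact hd
  have hφint : Integrable φ (volume.restrict (Ioc (0:ℝ) τ)) := hφcont.integrableOn_Ioc
  have hDCT := tendsto_integral_of_dominated_convergence (fun _ => M) hFmeas hboundint
    hFbound htend
  -- identify the limit with g τ - g 0 via FTC for the continuous g
  set G : ℝ → ℝ := fun t => ∫ u in (0:ℝ)..t, g u with hGdef
  have hG : ∀ t, HasDerivAt G (g t) t := fun t =>
    (intervalIntegral.integral_hasStrictDerivAt_right (hgcont.intervalIntegrable _ _)
      (hgcont.stronglyMeasurableAtFilter _ _) hgcont.continuousAt).hasDerivAt
  have hIeq : ∀ n, (∫ s in (0:ℝ)..τ, F n s)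
      = (G (τ + h n) - G τ) / h n - (G (0 + h n) - G 0) / h n := by
    intro n
    have hint1 : IntervalIntegrable (fun s => g (s + h n)) volume 0 τ :=
      (hgcont.comp (continuous_id.add continuous_const)).intervalIntegrable _ _
    have hint2 : IntervalIntegrable g volume 0 τ := hgcont.intervalIntegrable _ _
    have e0 : (∫ s in (0:ℝ)..τ, F n s)
        = (∫ s in (0:ℝ)..τ, (g (s + h n) - g s)) / h n := by
      simp only [hFdef]
      rw [intervalIntegral.integral_div]
    rw [e0, intervalIntegral.integral_sub hint1 hint2,
      intervalIntegral.integral_comp_add_right g (h n)]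
    have e1 : (∫ x in (0 + h n)..(τ + h n), g x) = G (τ + h n) - G (0 + h n) := by
      have e2 := intervalIntegral.integral_interval_sub_left
        (hgcont.intervalIntegrable 0 (τ + h n) : IntervalIntegrable g volume 0 (τ + h n))
        (hgcont.intervalIntegrable 0 (0 + h n) : IntervalIntegrable g volume 0 (0 + h n))
      simp only [hGdef]
      linarith [e2]
    rw [e1]
    have hG0 : G 0 = 0 := intervalIntegral.integral_same
    have hGτ : G τ = ∫ s in (0:ℝ)..τ, g s := rfl
    rw [hG0, ← hGτ]
    ring
  have hlim2 : Filter.Tendsto (fun n => ∫ s in (0:ℝ)..τ, F n s) Filter.atTop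
      (nhds (g τ - g 0)) := by
    have hc := (key G (g τ) τ (hG τ)).sub (key G (g 0) 0 (hG 0))
    exact hc.congr fun n => (hIeq n).symm
  have hinteq : ∀ n, (∫ s in (0:ℝ)..τ, F n s) = ∫ s, F n s ∂(volume.restrict (Ioc (0:ℝ) τ)) :=
    fun n => intervalIntegral.integral_of_le hτ
  have huniq : g τ - g 0 = ∫ s, φ s ∂(volume.restrict (Ioc (0:ℝ) τ)) :=
    tendsto_nhds_unique (hlim2.congr hinteq) hDCT
  have hφIoc : (∫ s, φ s ∂(volume.restrict (Ioc (0:ℝ) τ))) = ∫ s in (0:ℝ)..τ, φ s :=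
    (intervalIntegral.integral_of_le hτ).symm
  have hcongr : (∫ s in (0:ℝ)..τ, φ s) = ∫ s in (0:ℝ)..τ, 2 * (E - V (γ s)) := by
    apply intervalIntegral.integral_congr
    intro s hs
    rw [uIcc_of_le hτ] at hs
    simp only [hφdef]
    rw [hPid s hs]
  have hgτ : g τ = v (γ τ) := by
    simp only [hgdef]; rw [hPid τ (right_mem_Icc.mpr hτ)]
  have hg0 : g 0 = v (γ 0) := by
    simp only [hgdef]; rw [hPid 0 (left_mem_Icc.mpr hτ)]
  have eq1 : v (γ τ) - v (γ 0) = ∫ s in (0:ℝ)..τ, 2 * (E - V (γ s)) := by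
    rw [← hgτ, ← hg0, huniq, hφIoc, hcongr]
  refine ⟨eq1, ?_⟩
  rw [ge_iff_le, eq1]
  have hintg : IntervalIntegrable (fun s => 2 * (E - V (γ s))) volume 0 τ := by
    rw [intervalIntegrable_iff_integrableOn_Ioc_of_le hτ]
    refine hφint.congr ?_
    refine (ae_restrict_iff' measurableSet_Ioc).mpr (Filter.Eventually.of_forall fun s hs => ?_)
    simp only [hφdef]
    rw [hPid s (Ioc_subset_Icc_self hs)]
  have hmono : ∀ s ∈ Icc (0:ℝ) τ, 2 * (E - sSup (range V)) ≤ 2 * (E - V (γ s)) := by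
    intro s _
    have : V (γ s) ≤ sSup (range V) := le_csSup hVbdd ⟨γ s, rfl⟩
    linarith
  calc 2 * (E - sSup (range V)) * τ
      = ∫ _ in (0:ℝ)..τ, 2 * (E - sSup (range V)) := by
        rw [intervalIntegral.integral_const, smul_eq_mul]
        ring
    _ ≤ ∫ s in (0:ℝ)..τ, 2 * (E - V (γ s)) :=
        intervalIntegral.integral_mono_on hτ intervalIntegrable_const hintg hmono
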